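/- Let B ⊆ ℝⁿ be a closed ball with n ≥ 1, and let h : ℝⁿ → ℝⁿ be a homeomorphism. Then for any point c ∈ ℝⁿ, the maximum of x ↦ ‖h(x) - c‖ over B is attained at some point of the boundary sphere of B, i.e. max_{x ∈ B} ‖h(x) - c‖ = max_{x ∈ ∂B} ‖h(x) - c‖. -/

import Mathlib

theorem stmt_12 {n : ℕ} (hn : 1 ≤ n)
    (h : EuclideanSpace ℝ (Fin n) ≃ₜ EuclideanSpace ℝ (Fin n))
    (x₀ c : EuclideanSpace ℝ (Fin n)) (δ : ℝ) (hδ : 0 ≤ δ) :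
    (∃ y ∈ Metric.sphere x₀ δ,
      (∀ x ∈ Metric.closedBall x₀ δ, ‖h x - c‖ ≤ ‖h y - c‖)) ∧
    sSup ((fun x => ‖h x - c‖) '' Metric.closedBall x₀ δ) =
      sSup ((fun x => ‖h x - c‖) '' Metric.sphere x₀ δ) := by
  haveI : Nonempty (Fin n) := ⟨⟨0, hn⟩⟩
  haveI : Nontrivial (EuclideanSpace ℝ (Fin n)) :=
    ⟨0, EuclideanSpace.single ⟨0, hn⟩ 1, fun hc => by
      simpa using congrArg (fun v : EuclideanSpace ℝ (Fin n) => v ⟨0, hn⟩) hc⟩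
  set f : EuclideanSpace ℝ (Fin n) → ℝ := fun x => ‖h x - c‖ with hf
  have hfc : Continuous f := (h.continuous.sub continuous_const).norm
  have hK : IsCompact (Metric.closedBall x₀ δ) := isCompact_closedBall x₀ δ
  have hKne : (Metric.closedBall x₀ δ).Nonempty := ⟨x₀, Metric.mem_closedBall_self hδ⟩
  obtain ⟨m, hm, hmax⟩ := hK.exists_isMaxOn hKne hfc.continuousOn
  have hmax' : ∀ x ∈ Metric.closedBall x₀ δ, f x ≤ f m := fun x hx => hmax hx
  have hyex : ∃ y ∈ Metric.sphere x₀ δ, f m ≤ f y := by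
    by_cases hM : f m = 0
    · obtain ⟨y, hy⟩ := (NormedSpace.sphere_nonempty (E := EuclideanSpace ℝ (Fin n)) (x := x₀) (r := δ)).2 hδ
      exact ⟨y, hy, by rw [hM]; positivity⟩
    · by_contra hcon
      push_neg at hcon
      have hms : m ∉ Metric.sphere x₀ δ := fun hs => absurd le_rfl (not_le.2 (hcon m hs))
      have hmb : m ∈ Metric.ball x₀ δ := by
        rcases lt_or_eq_of_le (Metric.mem_closedBall.1 hm) with h' | h'
        · exact Metric.mem_ball.2 h'
        · exact absurd h' hms
      have hU : IsOpen (h '' Metric.ball x₀ δ) := h.isOpenMap _ Metric.isOpen_ball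
      obtain ⟨ε, hε, hball⟩ := Metric.isOpen_iff.1 hU (h m) ⟨m, hmb, rfl⟩
      have hM' : 0 < f m := lt_of_le_of_ne (norm_nonneg _) (Ne.symm hM)
      set t := ε / (2 * f m) with ht
      have ht0 : 0 < t := div_pos hε (by positivity)
      have hz : h m + t • (h m - c) ∈ Metric.ball (h m) ε := by
        rw [Metric.mem_ball, dist_eq_norm]
        simp only [add_sub_cancel_left, norm_smul, Real.norm_eq_abs, abs_of_pos ht0]
        have : t * ‖h m - c‖ = ε / 2 := by
          rw [ht]; field_simp [hf]; ring
        rw [this]; linarith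
      obtain ⟨w, hw, hweq⟩ := hball hz
      have hfw : f w = (1 + t) * f m := by
        have : h w - c = (1 + t) • (h m - c) := by
          rw [hweq]; module
        simp only [hf, this, norm_smul, Real.norm_eq_abs,
          abs_of_pos (by linarith : (0:ℝ) < 1 + t)]
      have hlt : f m < f w := by
        rw [hfw]; nlinarith
      exact absurd (hmax' w (Metric.ball_subset_closedBall hw)) (not_le.2 hlt)
  obtain ⟨y, hy, hyge⟩ := hyex
  have hyK : y ∈ Metric.closedBall x₀ δ := Metric.sphere_subset_closedBall hy
  have hye : f y = f m := le_antisymm (hmax' y hyK) hyge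
  refine ⟨⟨y, hy, fun x hx => (hmax' x hx).trans hyge⟩, ?_⟩
  have h1 : IsGreatest (f '' Metric.closedBall x₀ δ) (f m) :=
    ⟨⟨m, hm, rfl⟩, by rintro _ ⟨x, hx, rfl⟩; exact hmax' x hx⟩
  have h2 : IsGreatest (f '' Metric.sphere x₀ δ) (f m) :=
    ⟨⟨y, hy, hye⟩, by
      rintro _ ⟨x, hx, rfl⟩
      exact hmax' x (Metric.sphere_subset_closedBall hx)⟩
  rw [h1.csSup_eq, h2.csSup_eq]
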